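/- Let A ∈ S_δ with spectral radius ρ(A) > 1 and B ∈ R_+^d. Then the translation parts B_n := Σ_{k=0}^{n-1} A^k B of the iterated affine maps x ↦ A^n x + B_n satisfy |B_n| ≤ β·‖A^n‖ for all n ≥ 1, where β := (1/δ)·|B|·Σ_{i=1}^∞ 1/‖A^i‖ < +∞. -/

import Mathlib

open Matrix BigOperators

/-- The ℓ¹ norm on `ℝ^d`. -/
def l1 {d : ℕ} (x : Fin d → ℝ) : ℝ := ∑ i, |x i|

/-- The maximum column sum of a matrix. -/
noncomputable def matNorm {d : ℕ} (A : Matrix (Fin d) (Fin d) ℝ) : ℝ :=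
  ⨆ j, ∑ i, A i j

/-- The semigroup `S` of nonnegative matrices each of whose columns contains a
positive entry. -/
def memS {d : ℕ} (A : Matrix (Fin d) (Fin d) ℝ) : Prop :=
  (∀ i j, 0 ≤ A i j) ∧ ∀ j, ∃ i, 0 < A i j

/-- The set `S_δ`. -/
def memSdelta {d : ℕ} (δ : ℝ) (A : Matrix (Fin d) (Fin d) ℝ) : Prop :=
  memS A ∧ ∀ i j k, δ * A i k ≤ A i j

/-- The spectral radius of a real matrix: the largest modulus of a complex
eigenvalue. -/
noncomputable def specRad {d : ℕ} (A : Matrix (Fin d) (Fin d) ℝ) : ℝ :=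
  sSup {r : ℝ | ∃ c : ℂ, c ∈ spectrum ℂ (A.map (fun a => (a : ℂ))) ∧ r = ‖c‖}


set_option linter.unusedSectionVars false

section Aux

variable {d : ℕ} [Nonempty (Fin d)] {δ : ℝ}


lemma colsum_le_matNorm (A : Matrix (Fin d) (Fin d) ℝ) (j : Fin d) :
    ∑ i, A i j ≤ matNorm A :=
  le_ciSup (f := fun j => ∑ i, A i j) (Set.Finite.bddAbove (Set.finite_range _)) j

lemma matNorm_le {A : Matrix (Fin d) (Fin d) ℝ} {x : ℝ} (h : ∀ j, ∑ i, A i j ≤ x) :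
    matNorm A ≤ x := ciSup_le (f := fun j => ∑ i, A i j) h

lemma exists_matNorm_eq (A : Matrix (Fin d) (Fin d) ℝ) :
    ∃ j, matNorm A = ∑ i, A i j := by
  obtain ⟨j, hj⟩ := Finite.exists_max (fun j => ∑ i, A i j)
  exact ⟨j, le_antisymm (matNorm_le hj) (colsum_le_matNorm _ _)⟩

lemma matNorm_one : matNorm (1 : Matrix (Fin d) (Fin d) ℝ) = 1 := by
  have : ∀ j : Fin d, ∑ i, (1 : Matrix (Fin d) (Fin d) ℝ) i j = 1 := by
    intro j
    simp [Matrix.one_apply]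
  rw [matNorm]
  simp [this]




lemma memSdelta_mul {X Y : Matrix (Fin d) (Fin d) ℝ} (hδ : 0 < δ)
    (hX : memSdelta δ X) (hY : memSdelta δ Y) : memSdelta δ (X * Y) := by
  obtain ⟨⟨hX0, hXc⟩, hXr⟩ := hX
  obtain ⟨⟨hY0, hYc⟩, hYr⟩ := hY
  refine ⟨⟨fun i j => ?_, fun j => ?_⟩, fun i j k => ?_⟩
  · rw [Matrix.mul_apply]
    exact Finset.sum_nonneg fun m _ => mul_nonneg (hX0 i m) (hY0 m j)
  · obtain ⟨m, hm⟩ := hYc j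
    obtain ⟨i, hi⟩ := hXc m
    refine ⟨i, ?_⟩
    rw [Matrix.mul_apply]
    refine Finset.sum_pos' (fun t _ => mul_nonneg (hX0 i t) (hY0 t j)) ⟨m, Finset.mem_univ m, mul_pos hi hm⟩
  · rw [Matrix.mul_apply, Matrix.mul_apply, Finset.mul_sum]
    refine Finset.sum_le_sum fun m _ => ?_
    have := mul_le_mul_of_nonneg_left (hYr m j k) (hX0 i m)
    calc δ * (X i m * Y m k) = X i m * (δ * Y m k) := by ring
      _ ≤ X i m * Y m j := this

lemma memSdelta_pow {A : Matrix (Fin d) (Fin d) ℝ} (hδ : 0 < δ)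
    (hA : memSdelta δ A) : ∀ n : ℕ, 1 ≤ n → memSdelta δ (A ^ n) := by
  intro n hn
  induction n with
  | zero => omega
  | succ m ih =>
    rcases Nat.eq_or_lt_of_le hn with h | h
    · simpa [← h] using (by simpa [pow_one] using hA)
    · rw [pow_succ]
      exact memSdelta_mul hδ (ih (by omega)) hA

lemma matNorm_nonneg {A : Matrix (Fin d) (Fin d) ℝ} (h0 : ∀ i j, 0 ≤ A i j) :
    0 ≤ matNorm A := by
  classical
  exact le_trans (Finset.sum_nonneg fun i _ => h0 i (Classical.arbitrary (Fin d)))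
    (colsum_le_matNorm A _)

lemma matNorm_pos {A : Matrix (Fin d) (Fin d) ℝ} (hA : memS A) : 0 < matNorm A := by
  obtain ⟨i, hi⟩ := hA.2 (Classical.arbitrary (Fin d))
  refine lt_of_lt_of_le ?_ (colsum_le_matNorm A (Classical.arbitrary (Fin d)))
  exact Finset.sum_pos' (fun t _ => hA.1 t _) ⟨i, Finset.mem_univ i, hi⟩

lemma delta_matNorm_le_colsum {X : Matrix (Fin d) (Fin d) ℝ} (hδ : 0 < δ)
    (hX : memSdelta δ X) (j : Fin d) : δ * matNorm X ≤ ∑ i, X i j := by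
  rw [mul_comm, ← le_div_iff₀ hδ]
  refine matNorm_le fun k => ?_
  rw [le_div_iff₀ hδ, mul_comm]
  calc δ * ∑ i, X i k = ∑ i, δ * X i k := Finset.mul_sum _ _ _
    _ ≤ ∑ i, X i j := Finset.sum_le_sum fun i _ => hX.2 i j k

lemma supermult {X Y : Matrix (Fin d) (Fin d) ℝ} (hδ : 0 < δ)
    (hX : memSdelta δ X) (hY0 : ∀ i j, 0 ≤ Y i j) :
    δ * matNorm X * matNorm Y ≤ matNorm (X * Y) := by
  obtain ⟨j0, hj0⟩ := exists_matNorm_eq Y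
  calc δ * matNorm X * matNorm Y = ∑ m, (δ * matNorm X) * Y m j0 := by
        rw [hj0, ← Finset.mul_sum]
    _ ≤ ∑ m, (∑ i, X i m) * Y m j0 :=
        Finset.sum_le_sum fun m _ =>
          mul_le_mul_of_nonneg_right (delta_matNorm_le_colsum hδ hX m) (hY0 m j0)
    _ = ∑ i, (X * Y) i j0 := by
        simp only [Matrix.mul_apply, Finset.sum_mul]
        exact Finset.sum_comm
    _ ≤ matNorm (X * Y) := colsum_le_matNorm _ _


lemma exists_rho {A : Matrix (Fin d) (Fin d) ℝ} (h0 : ∀ i j, 0 ≤ A i j)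
    (hρ : 1 < specRad A) : ∃ ρ₀ : ℝ, 1 < ρ₀ ∧ ∀ n : ℕ, ρ₀ ^ n ≤ matNorm (A ^ n) := by
  -- extract an eigenvalue of modulus > 1
  have hex : ∃ c : ℂ, c ∈ spectrum ℂ (A.map (fun a => (a : ℂ))) ∧ 1 < ‖c‖ := by
    by_contra h
    push_neg at h
    have : specRad A ≤ 1 := by
      apply Real.sSup_le _ zero_le_one
      rintro r ⟨c, hc, rfl⟩
      exact h c hc
    linarith
  obtain ⟨c, hc, hc1⟩ := hex
  set M := A.map (fun a => (a : ℂ)) with hM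
  -- get an eigenvector
  rw [spectrum.mem_iff] at hc
  have hdet : (algebraMap ℂ (Matrix (Fin d) (Fin d) ℂ) c - M).det = 0 := by
    by_contra h
    exact hc ((Matrix.isUnit_iff_isUnit_det _).mpr (isUnit_iff_ne_zero.mpr h))
  obtain ⟨v, hv0, hv⟩ := (Matrix.exists_mulVec_eq_zero_iff).mpr hdet
  have hMv : M.mulVec v = c • v := by
    have h1 : (algebraMap ℂ (Matrix (Fin d) (Fin d) ℂ) c - M).mulVec v
        = c • v - M.mulVec v := by
      rw [Matrix.sub_mulVec]
      congr 1
      rw [Algebra.algebraMap_eq_smul_one, Matrix.smul_mulVec, Matrix.one_mulVec]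
    rw [hv] at h1
    exact (sub_eq_zero.mp h1.symm).symm
  -- powers
  have hpow : ∀ n : ℕ, (M ^ n).mulVec v = c ^ n • v := by
    intro n
    induction n with
    | zero => simp [Matrix.one_mulVec]
    | succ m ih =>
      rw [pow_succ, ← Matrix.mulVec_mulVec, hMv, Matrix.mulVec_smul, ih, pow_succ, mul_comm,
        mul_smul]
  have hMn : ∀ n : ℕ, M ^ n = (A ^ n).map (fun a => (a : ℂ)) := by
    intro n
    have : ∀ B : Matrix (Fin d) (Fin d) ℝ, B.map (fun a => (a : ℂ))
        = Complex.ofRealHom.mapMatrix B := fun B => rfl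
    rw [hM, this, this, ← map_pow]
  set s : ℝ := ∑ j, ‖v j‖ with hs
  have hspos : 0 < s := by
    have : v ≠ 0 := hv0
    rcases Function.ne_iff.mp this with ⟨j, hj⟩
    refine Finset.sum_pos' (fun t _ => norm_nonneg _) ⟨j, Finset.mem_univ j, ?_⟩
    simpa using hj
  refine ⟨‖c‖, hc1, fun n => ?_⟩
  have hA0n : ∀ i j, 0 ≤ (A ^ n) i j := by
    intro i j
    induction n generalizing i j with
    | zero => by_cases h : i = j <;> simp [pow_zero, Matrix.one_apply, h]
    | succ m ih =>
      rw [pow_succ, Matrix.mul_apply]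
      exact Finset.sum_nonneg fun t _ => mul_nonneg (ih i t) (h0 t j)
  have key : ‖c‖ ^ n * s ≤ matNorm (A ^ n) * s := by
    have hrow : ∀ i, ((M ^ n).mulVec v) i = ∑ j, ((A ^ n) i j : ℂ) * v j := by
      intro i
      rw [hMn]
      simp [Matrix.mulVec, dotProduct, Matrix.map_apply]
    calc ‖c‖ ^ n * s = ∑ i, ‖(c ^ n • v) i‖ := by
          rw [hs, Finset.mul_sum]
          refine Finset.sum_congr rfl fun i _ => ?_
          simp [Pi.smul_apply, smul_eq_mul, norm_mul, norm_pow]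
      _ = ∑ i, ‖((M ^ n).mulVec v) i‖ := by rw [hpow]
      _ ≤ ∑ i, ∑ j, (A ^ n) i j * ‖v j‖ := by
          refine Finset.sum_le_sum fun i _ => ?_
          rw [hrow]
          refine le_trans (norm_sum_le _ _) (le_of_eq ?_)
          refine Finset.sum_congr rfl fun j _ => ?_
          rw [norm_mul, Complex.norm_real, Real.norm_eq_abs, abs_of_nonneg (hA0n i j)]
      _ = ∑ j, (∑ i, (A ^ n) i j) * ‖v j‖ := by
          rw [Finset.sum_comm]
          simp [Finset.sum_mul]
      _ ≤ ∑ j, matNorm (A ^ n) * ‖v j‖ :=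
          Finset.sum_le_sum fun j _ =>
            mul_le_mul_of_nonneg_right (colsum_le_matNorm _ _) (norm_nonneg _)
      _ = matNorm (A ^ n) * s := by rw [hs, Finset.mul_sum]
  exact le_of_mul_le_mul_right key hspos


lemma pow_entries_nonneg {A : Matrix (Fin d) (Fin d) ℝ} (h0 : ∀ i j, 0 ≤ A i j)
    (n : ℕ) : ∀ i j, 0 ≤ (A ^ n) i j := by
  induction n with
  | zero => intro i j; by_cases h : i = j <;> simp [pow_zero, Matrix.one_apply, h]
  | succ m ih =>
    intro i j
    rw [pow_succ, Matrix.mul_apply]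
    exact Finset.sum_nonneg fun t _ => mul_nonneg (ih i t) (h0 t j)

lemma l1_nonneg (x : Fin d → ℝ) : 0 ≤ l1 x :=
  Finset.sum_nonneg fun i _ => abs_nonneg _

lemma l1_sum_le {s : Finset ℕ} (v : ℕ → Fin d → ℝ) :
    l1 (∑ k ∈ s, v k) ≤ ∑ k ∈ s, l1 (v k) := by
  unfold l1
  calc ∑ i, |(∑ k ∈ s, v k) i| ≤ ∑ i, ∑ k ∈ s, |v k i| :=
        Finset.sum_le_sum fun i _ => by
          simpa using Finset.abs_sum_le_sum_abs (fun k => v k i) s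
    _ = ∑ k ∈ s, ∑ i, |v k i| := Finset.sum_comm

lemma l1_mulVec_le {M : Matrix (Fin d) (Fin d) ℝ} {x : Fin d → ℝ}
    (h0 : ∀ i j, 0 ≤ M i j) (hx : ∀ i, 0 ≤ x i) :
    l1 (M.mulVec x) ≤ matNorm M * l1 x := by
  unfold l1
  have habs : ∀ i, |M.mulVec x i| = ∑ j, M i j * x j := by
    intro i
    rw [abs_of_nonneg]
    · simp [Matrix.mulVec, dotProduct]
    · simp only [Matrix.mulVec, dotProduct]
      exact Finset.sum_nonneg fun j _ => mul_nonneg (h0 i j) (hx j)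
  calc ∑ i, |M.mulVec x i| = ∑ i, ∑ j, M i j * x j := Finset.sum_congr rfl fun i _ => habs i
    _ = ∑ j, (∑ i, M i j) * x j := by rw [Finset.sum_comm]; simp [Finset.sum_mul]
    _ ≤ ∑ j, matNorm M * x j :=
        Finset.sum_le_sum fun j _ =>
          mul_le_mul_of_nonneg_right (colsum_le_matNorm _ _) (hx j)
    _ = matNorm M * ∑ j, |x j| := by
        rw [Finset.mul_sum]
        exact Finset.sum_congr rfl fun j _ => by rw [abs_of_nonneg (hx j)]


end Aux

theorem stmt15 {d : ℕ} (hd : 2 ≤ d) (δ : ℝ) (hδ0 : 0 < δ) (hδ1 : δ ≤ 1)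
    (A : Matrix (Fin d) (Fin d) ℝ) (hA : memSdelta δ A) (hρ : 1 < specRad A)
    (B : Fin d → ℝ) (hB : ∀ i, 0 ≤ B i) :
    Summable (fun i : ℕ => 1 / matNorm (A ^ (i + 1))) ∧
      ∀ n : ℕ, 1 ≤ n →
        l1 (∑ k ∈ Finset.range n, (A ^ k).mulVec B) ≤
          ((1 / δ) * l1 B * ∑' i : ℕ, 1 / matNorm (A ^ (i + 1))) * matNorm (A ^ n) := by
  haveI : Nonempty (Fin d) := ⟨⟨0, by omega⟩⟩
  obtain ⟨ρ₀, hρ1, hρn⟩ := exists_rho hA.1.1 hρ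
  have hρ0 : 0 < ρ₀ := lt_trans one_pos hρ1
  have hposn : ∀ n : ℕ, 1 ≤ n → 0 < matNorm (A ^ n) := fun n hn =>
    matNorm_pos (memSdelta_pow hδ0 hA n hn).1
  have hle : ∀ i : ℕ, 1 / matNorm (A ^ (i + 1)) ≤ (1 / ρ₀) ^ (i + 1) := by
    intro i
    rw [_root_.one_div_pow]
    exact one_div_le_one_div_of_le (pow_pos hρ0 _) (hρn (i + 1))
  have hgeom : Summable (fun i : ℕ => (1 / ρ₀) ^ (i + 1)) := by
    have h1 : (1 : ℝ) / ρ₀ < 1 := by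
      rw [div_lt_one hρ0]; exact hρ1
    have h2 : Summable (fun i : ℕ => (1 / ρ₀) ^ i) :=
      summable_geometric_of_lt_one (by positivity) h1
    simpa [pow_succ'] using h2.mul_left (1 / ρ₀)
  have hsum : Summable (fun i : ℕ => 1 / matNorm (A ^ (i + 1))) :=
    Summable.of_nonneg_of_le (fun i => one_div_nonneg.mpr (hposn _ (by omega)).le) hle hgeom
  refine ⟨hsum, fun n hn => ?_⟩
  have hB1 : 0 ≤ l1 B := l1_nonneg B
  have hterm : ∀ k ∈ Finset.range n,
      matNorm (A ^ k) ≤ (1 / δ) * (1 / matNorm (A ^ (n - k))) * matNorm (A ^ n) := by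
    intro k hk
    rw [Finset.mem_range] at hk
    have hnk : 1 ≤ n - k := by omega
    have hc := hposn (n - k) hnk
    rcases Nat.eq_zero_or_pos k with rfl | hk1
    · rw [pow_zero, matNorm_one, Nat.sub_zero]
      have hNe : matNorm (A ^ n) ≠ 0 := (hposn n hn).ne'
      have : (1 / δ) * (1 / matNorm (A ^ n)) * matNorm (A ^ n) = 1 / δ := by
        field_simp
      rw [this]
      rw [le_div_iff₀ hδ0, one_mul]
      exact hδ1
    · have h1 := supermult hδ0 (memSdelta_pow hδ0 hA k hk1)
        (pow_entries_nonneg hA.1.1 (n - k))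
      rw [← pow_add] at h1
      rw [show k + (n - k) = n by omega] at h1
      rw [show (1 / δ) * (1 / matNorm (A ^ (n - k))) * matNorm (A ^ n)
          = matNorm (A ^ n) / (δ * matNorm (A ^ (n - k))) by ring,
        le_div_iff₀ (by positivity)]
      calc matNorm (A ^ k) * (δ * matNorm (A ^ (n - k)))
          = δ * matNorm (A ^ k) * matNorm (A ^ (n - k)) := by ring
        _ ≤ matNorm (A ^ n) := h1
  have hre : ∑ k ∈ Finset.range n, 1 / matNorm (A ^ (n - k))
      = ∑ j ∈ Finset.range n, 1 / matNorm (A ^ (j + 1)) := by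
    rw [← Finset.sum_range_reflect (fun j => 1 / matNorm (A ^ (j + 1))) n]
    refine Finset.sum_congr rfl fun k hk => ?_
    rw [Finset.mem_range] at hk
    rw [show n - k = n - 1 - k + 1 from by omega]
  have hpartial : ∑ k ∈ Finset.range n, 1 / matNorm (A ^ (n - k))
      ≤ ∑' i : ℕ, 1 / matNorm (A ^ (i + 1)) := by
    rw [hre]
    exact Summable.sum_le_tsum (Finset.range n)
      (fun i _ => one_div_nonneg.mpr (hposn _ (by omega)).le) hsum
  calc l1 (∑ k ∈ Finset.range n, (A ^ k).mulVec B)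
      ≤ ∑ k ∈ Finset.range n, l1 ((A ^ k).mulVec B) := l1_sum_le _
    _ ≤ ∑ k ∈ Finset.range n, matNorm (A ^ k) * l1 B :=
        Finset.sum_le_sum fun k _ => l1_mulVec_le (pow_entries_nonneg hA.1.1 k) hB
    _ ≤ ∑ k ∈ Finset.range n,
          ((1 / δ) * (1 / matNorm (A ^ (n - k))) * matNorm (A ^ n)) * l1 B :=
        Finset.sum_le_sum fun k hk => mul_le_mul_of_nonneg_right (hterm k hk) hB1
    _ = ((1 / δ) * l1 B * ∑ k ∈ Finset.range n, 1 / matNorm (A ^ (n - k)))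
          * matNorm (A ^ n) := by
        simp only [Finset.sum_mul, Finset.mul_sum]
        exact Finset.sum_congr rfl fun k _ => by ring
    _ ≤ ((1 / δ) * l1 B * ∑' i : ℕ, 1 / matNorm (A ^ (i + 1))) * matNorm (A ^ n) := by
        have hN : 0 ≤ matNorm (A ^ n) := (hposn n hn).le
        refine mul_le_mul_of_nonneg_right ?_ hN
        exact mul_le_mul_of_nonneg_left hpartial (by positivity)
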